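/- The function y = N_ν(z) = a z² J_ν''(z) + b z J_ν'(z) + c J_ν(z) satisfies the differential equation z² y'' + A(z) z y' + [B(z) + z² − ν²] y = 0, where A(z) = (−3a²z⁴ + p z² + q)/(a²z⁴ − p z² + q), B(z) = (2a(a+b)z⁴ + 2r z²)/(a²z⁴ − p z² + q), with p = 2a(aν² + c) + (a² − b²), q = (aν² + c)² − ν²(a − b)², r = aν²(3a − b) + c(a + b), at all points where a²z⁴ − p z² + q ≠ 0. -/

import Mathlib

open Real

/-- The Bessel function of the first kind `J_ν(x)`, for `x > 0`, defined by its series. -/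
noncomputable def besselJ (ν : ℝ) (x : ℝ) : ℝ :=
  ∑' n : ℕ, (-1 : ℝ) ^ n * (x / 2) ^ (2 * (n : ℝ) + ν) / (n.factorial * Real.Gamma (ν + n + 1))

/-- `N_ν(z) = a z² J_ν''(z) + b z J_ν'(z) + c J_ν(z)`. -/
noncomputable def mercerN (a b c ν : ℝ) (z : ℝ) : ℝ :=
  a * z ^ 2 * iteratedDeriv 2 (besselJ ν) z + b * z * deriv (besselJ ν) z + c * besselJ ν z

namespace MercerAux

/-- Series coefficients of the Bessel function. -/
noncomputable def co (ν : ℝ) (n : ℕ) : ℝ :=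
  (-1 : ℝ) ^ n / (n.factorial * Real.Gamma (ν + n + 1))

/-- Falling-factorial-type products appearing when differentiating the series termwise. -/
noncomputable def mfac (ν : ℝ) (n k : ℕ) : ℝ :=
  ∏ j ∈ Finset.range k, ((2 * (n : ℝ) + ν - (j : ℝ)) / 2)

/-- `bJ ν k` is the `k`-th termwise derivative of the Bessel series. -/
noncomputable def bJ (ν : ℝ) (k : ℕ) (z : ℝ) : ℝ :=
  ∑' n : ℕ, co ν n * mfac ν n k * (z / 2) ^ (2 * (n : ℝ) + ν - (k : ℝ))

lemma besselJ_eq (ν : ℝ) : besselJ ν = bJ ν 0 := by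
  funext x
  apply tsum_congr
  intro n
  simp only [co, mfac, bJ, Finset.range_zero, Finset.prod_empty, Nat.cast_zero, sub_zero,
    mul_one]
  ring

lemma co_succ (ν : ℝ) (n : ℕ) :
    ((n : ℝ) + 1) * (ν + n + 1) * co ν (n + 1) = - co ν n := by
  have hfac : (((n + 1).factorial : ℕ) : ℝ) = ((n : ℝ) + 1) * (n.factorial : ℝ) := by
    push_cast [Nat.factorial_succ]; ring
  have harg : ν + ((n : ℕ) + 1 : ℕ) + 1 = (ν + n + 1) + 1 := by push_cast; ring
  unfold co
  rw [harg, hfac]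
  rcases eq_or_ne (ν + n + 1) 0 with h | h
  · rw [h]
    simp [Real.Gamma_one, Real.Gamma_zero]
  · rw [Real.Gamma_add_one h]
    rcases eq_or_ne (Real.Gamma (ν + n + 1)) 0 with hg | hg
    · rw [hg]; simp
    · have hn : ((n : ℝ) + 1) ≠ 0 := by positivity
      have hfn : (n.factorial : ℝ) ≠ 0 := by positivity
      field_simp
      ring

lemma co_abs_succ (ν : ℝ) (n : ℕ) (h : 0 ≤ ν + n) :
    |co ν (n + 1)| ≤ |co ν n| / ((n : ℝ) + 1) := by
  have h1 : (0:ℝ) < (n : ℝ) + 1 := by positivity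
  have h2 : (1:ℝ) ≤ ν + n + 1 := by linarith
  have habs : (((n : ℝ) + 1) * (ν + n + 1)) * |co ν (n + 1)| = |co ν n| := by
    rw [← abs_of_pos (show (0:ℝ) < ((n : ℝ) + 1) * (ν + n + 1) by nlinarith), ← abs_mul,
      co_succ ν n, abs_neg]
  rw [le_div_iff₀ h1]
  nlinarith [mul_nonneg h (mul_nonneg h1.le (abs_nonneg (co ν (n + 1))))]

lemma smaster (ν : ℝ) (K : ℕ) (R : ℝ) (hR : 0 < R) :
    Summable (fun n : ℕ => |co ν n| * ((n : ℝ) + 1) ^ K * R ^ n) := by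
  apply summable_of_ratio_norm_eventually_le (r := 1/2) (by norm_num)
  obtain ⟨N1, hN1⟩ := exists_nat_ge (|ν|)
  obtain ⟨N2, hN2⟩ := exists_nat_ge (2 * (2 ^ K * R))
  filter_upwards [Filter.eventually_ge_atTop (max N1 N2)] with n hn
  have hn1 : (N1 : ℝ) ≤ n := by exact_mod_cast le_trans (le_max_left N1 N2) hn
  have hn2 : (N2 : ℝ) ≤ n := by exact_mod_cast le_trans (le_max_right N1 N2) hn
  have hν : 0 ≤ ν + n := by
    have := neg_abs_le ν; linarith
  have hco := co_abs_succ ν n hν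
  have hp1 : (0:ℝ) < (n : ℝ) + 1 := by positivity
  have hfrac : 2 ^ K * R / ((n : ℝ) + 1) ≤ 1 / 2 := by
    rw [div_le_div_iff₀ hp1 (by norm_num)]
    linarith
  have hpow : ((n : ℝ) + 1 + 1) ^ K ≤ 2 ^ K * ((n : ℝ) + 1) ^ K := by
    rw [← mul_pow]
    exact pow_le_pow_left₀ (by positivity) (by linarith) K
  have e1 : ‖|co ν (n+1)| * (((n+1 : ℕ) : ℝ) + 1) ^ K * R ^ (n+1)‖
      = |co ν (n+1)| * (((n+1 : ℕ) : ℝ) + 1) ^ K * R ^ (n+1) := by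
    rw [Real.norm_eq_abs]; exact abs_of_nonneg (by positivity)
  have e2 : ‖|co ν n| * ((n : ℝ) + 1) ^ K * R ^ n‖
      = |co ν n| * ((n : ℝ) + 1) ^ K * R ^ n := by
    rw [Real.norm_eq_abs]; exact abs_of_nonneg (by positivity)
  rw [e1, e2]
  calc |co ν (n + 1)| * (((n+1 : ℕ) : ℝ) + 1) ^ K * R ^ (n + 1)
      ≤ (|co ν n| / ((n : ℝ) + 1)) * (2 ^ K * ((n : ℝ) + 1) ^ K) * R ^ (n + 1) := by
        push_cast
        gcongr
    _ = (|co ν n| * ((n : ℝ) + 1) ^ K * R ^ n) * (2 ^ K * R / ((n : ℝ) + 1)) := by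
        rw [pow_succ]; field_simp
    _ ≤ (|co ν n| * ((n : ℝ) + 1) ^ K * R ^ n) * (1 / 2) := by
        apply mul_le_mul_of_nonneg_left hfrac (by positivity)
    _ = 1 / 2 * (|co ν n| * ((n : ℝ) + 1) ^ K * R ^ n) := by ring

lemma summable_dom (ν : ℝ) (K : ℕ) {R C : ℝ} (hR : 0 < R) {g : ℕ → ℝ}
    (h : ∀ n, |g n| ≤ C * (|co ν n| * ((n : ℝ) + 1) ^ K * R ^ n)) : Summable g := by
  refine Summable.of_norm_bounded ((smaster ν K R hR).mul_left C) ?_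
  simpa [Real.norm_eq_abs] using h

lemma mfac_bound (ν : ℝ) (n k : ℕ) :
    |mfac ν n k| ≤ ((2 + |ν| + k) / 2 * ((n : ℝ) + 1)) ^ k := by
  unfold mfac
  rw [Finset.abs_prod]
  have hconst : ((2 + |ν| + k) / 2 * ((n : ℝ) + 1)) ^ k
      = ∏ _j ∈ Finset.range k, ((2 + |ν| + k) / 2 * ((n : ℝ) + 1)) := by
    rw [Finset.prod_const, Finset.card_range]
  rw [hconst]
  apply Finset.prod_le_prod (fun j _ => abs_nonneg _)
  intro j hj
  have hjk : (j : ℝ) ≤ k := by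
    exact_mod_cast le_of_lt (Finset.mem_range.mp hj)
  have hja : |(j : ℝ)| = (j : ℝ) := abs_of_nonneg (by positivity)
  have h2 : |2 * (n : ℝ) + ν| ≤ 2 * (n : ℝ) + |ν| := by
    have ha := abs_add_le (2 * (n : ℝ)) ν
    have h3 : |2 * (n : ℝ)| = 2 * (n : ℝ) := abs_of_nonneg (by positivity)
    linarith
  have h1 : |2 * (n : ℝ) + ν - j| ≤ 2 * n + |ν| + j := by
    have hs := abs_sub (2 * (n : ℝ) + ν) (j : ℝ)
    linarith
  rw [abs_div, (show |(2:ℝ)| = 2 by norm_num), div_le_iff₀ (by norm_num : (0:ℝ) < 2)]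
  have hν := abs_nonneg ν
  have hn : (0:ℝ) ≤ n := Nat.cast_nonneg n
  have hj0 : (0:ℝ) ≤ j := Nat.cast_nonneg j
  nlinarith [mul_nonneg hν hn, mul_nonneg hj0 hn, mul_nonneg (show (0:ℝ) ≤ k from Nat.cast_nonneg k) hn]

/-- The generic bound for the terms of `bJ ν k` on the interval `(z/2, 2z)`. -/
lemma term_bound (ν : ℝ) (k n : ℕ) {z x : ℝ} (hz : 0 < z) (hx1 : z / 2 < x)
    (hx2 : x < 2 * z) :
    |co ν n * mfac ν n k * (x / 2) ^ (2 * (n : ℝ) + ν - (k : ℝ))| ≤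
      (((2 + |ν| + k) / 2) ^ k * max ((z / 4) ^ (ν - (k : ℝ))) (z ^ (ν - (k : ℝ))))
        * (|co ν n| * ((n : ℝ) + 1) ^ k * (z ^ 2) ^ n) := by
  have hx0 : 0 < x := lt_trans (by positivity) hx1
  have hx20 : 0 < x / 2 := by positivity
  have hexp : 2 * (n : ℝ) + ν - (k : ℝ) = ((2 * n : ℕ) : ℝ) + (ν - (k : ℝ)) := by
    push_cast; ring
  have hsplit : (x / 2) ^ (2 * (n : ℝ) + ν - (k : ℝ))
      = (x / 2) ^ (2 * n : ℕ) * (x / 2) ^ (ν - (k : ℝ)) := by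
    rw [hexp, Real.rpow_add hx20, Real.rpow_natCast]
  have hb1 : (x / 2) ^ (2 * n : ℕ) ≤ (z ^ 2) ^ n := by
    rw [show (z ^ 2) ^ n = z ^ (2 * n) by rw [pow_mul]]
    exact pow_le_pow_left₀ hx20.le (by linarith) _
  have hb2 : (x / 2) ^ (ν - (k : ℝ)) ≤ max ((z / 4) ^ (ν - (k : ℝ))) (z ^ (ν - (k : ℝ))) := by
    rcases le_or_gt 0 (ν - (k : ℝ)) with he | he
    · exact le_max_of_le_right (Real.rpow_le_rpow hx20.le (by linarith) he)
    · exact le_max_of_le_left (Real.rpow_le_rpow_of_nonpos (by positivity) (by linarith) he.le)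
  have hpow_nonneg : (0:ℝ) ≤ (x / 2) ^ (ν - (k : ℝ)) := Real.rpow_nonneg hx20.le _
  have hmf := mfac_bound ν n k
  calc |co ν n * mfac ν n k * (x / 2) ^ (2 * (n : ℝ) + ν - (k : ℝ))|
      = |co ν n| * |mfac ν n k| * ((x / 2) ^ (2 * n : ℕ) * (x / 2) ^ (ν - (k : ℝ))) := by
        rw [abs_mul, abs_mul, hsplit]
        congr 1
        exact abs_of_nonneg (by positivity)
    _ ≤ |co ν n| * (((2 + |ν| + k) / 2) * ((n : ℝ) + 1)) ^ k
          * ((z ^ 2) ^ n * max ((z / 4) ^ (ν - (k : ℝ))) (z ^ (ν - (k : ℝ)))) := by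
        gcongr
    _ = (((2 + |ν| + k) / 2) ^ k * max ((z / 4) ^ (ν - (k : ℝ))) (z ^ (ν - (k : ℝ))))
          * (|co ν n| * ((n : ℝ) + 1) ^ k * (z ^ 2) ^ n) := by
        rw [mul_pow]; ring

lemma bJ_summable (ν : ℝ) (k : ℕ) {z : ℝ} (hz : 0 < z) :
    Summable (fun n : ℕ => co ν n * mfac ν n k * (z / 2) ^ (2 * (n : ℝ) + ν - (k : ℝ))) := by
  apply summable_dom ν k (R := z ^ 2) (by positivity)
  intro n
  exact term_bound ν k n hz (by linarith) (by linarith)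

lemma term_deriv (ν : ℝ) (k n : ℕ) {x : ℝ} (hx : 0 < x) :
    HasDerivAt (fun y => co ν n * mfac ν n k * (y / 2) ^ (2 * (n : ℝ) + ν - (k : ℝ)))
      (co ν n * mfac ν n (k + 1) * (x / 2) ^ (2 * (n : ℝ) + ν - ((k + 1 : ℕ) : ℝ))) x := by
  have hx2 : x / 2 ≠ 0 := by positivity
  have h1 : HasDerivAt (fun y : ℝ => y / 2) (1 / 2) x := by
    simpa using (hasDerivAt_id x).div_const 2
  have h2 : HasDerivAt (fun w : ℝ => w ^ (2 * (n : ℝ) + ν - (k : ℝ)))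
      ((2 * (n : ℝ) + ν - (k : ℝ)) * (x / 2) ^ (2 * (n : ℝ) + ν - (k : ℝ) - 1)) (x / 2) :=
    Real.hasDerivAt_rpow_const (Or.inl hx2)
  have h3 := (h2.comp x h1).const_mul (co ν n * mfac ν n k)
  refine h3.congr_deriv ?_
  have hexp : 2 * (n : ℝ) + ν - ((k + 1 : ℕ) : ℝ) = 2 * (n : ℝ) + ν - (k : ℝ) - 1 := by
    push_cast; ring
  rw [hexp]
  have hm : mfac ν n (k + 1) = mfac ν n k * ((2 * (n : ℝ) + ν - (k : ℝ)) / 2) := by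
    unfold mfac; rw [Finset.prod_range_succ]
  rw [hm]
  ring

lemma bJ_hasDerivAt (ν : ℝ) (k : ℕ) {z : ℝ} (hz : 0 < z) :
    HasDerivAt (bJ ν k) (bJ ν (k + 1) z) z := by
  have hmem : z ∈ Set.Ioo (z / 2) (2 * z) := ⟨by linarith, by linarith⟩
  refine hasDerivAt_tsum_of_isPreconnected
    (u := fun n => (((2 + |ν| + ((k+1 : ℕ) : ℝ)) / 2) ^ (k+1)
        * max ((z / 4) ^ (ν - ((k+1 : ℕ) : ℝ))) (z ^ (ν - ((k+1 : ℕ) : ℝ))))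
        * (|co ν n| * ((n : ℝ) + 1) ^ (k+1) * (z ^ 2) ^ n))
    ((smaster ν (k+1) (z^2) (by positivity)).mul_left _)
    (isOpen_Ioo (a := z / 2) (b := 2 * z)) (convex_Ioo _ _).isPreconnected
    (fun n y hy => term_deriv ν k n ?_) (fun n y hy => ?_) hmem (bJ_summable ν k hz) hmem
  · have h1 := hy.1
    linarith
  · rw [Real.norm_eq_abs]
    exact term_bound ν (k+1) n hz hy.1 hy.2

lemma bessel_ode (ν : ℝ) {z : ℝ} (hz : 0 < z) :
    z ^ 2 * bJ ν 2 z + z * bJ ν 1 z + (z ^ 2 - ν ^ 2) * bJ ν 0 z = 0 := by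
  have hz' : z ≠ 0 := ne_of_gt hz
  have hP : (0:ℝ) < z / 2 := by positivity
  set H : ℕ → ℝ := fun n => 4 * (n : ℝ) * ((n : ℝ) + ν) * co ν n * (z / 2) ^ (2 * (n : ℝ) + ν)
    with hHdef
  -- splitting of the rpow
  have hsplit : ∀ n : ℕ, (z / 2) ^ (2 * (n : ℝ) + ν) = ((z / 2) ^ 2) ^ n * (z / 2) ^ ν := by
    intro n
    rw [show 2 * (n : ℝ) + ν = ((2 * n : ℕ) : ℝ) + ν by push_cast; ring,
      Real.rpow_add hP, Real.rpow_natCast, pow_mul]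
  have hHsum : Summable H := by
    apply summable_dom ν 2 (R := (z / 2) ^ 2) (C := 4 * (1 + |ν|) * (z / 2) ^ ν) (by positivity)
    intro n
    have h1 : |H n| = 4 * (n : ℝ) * |(n : ℝ) + ν| * |co ν n| * (((z / 2) ^ 2) ^ n * (z / 2) ^ ν) := by
      show |4 * (n : ℝ) * ((n : ℝ) + ν) * co ν n * (z / 2) ^ (2 * (n : ℝ) + ν)| = _
      rw [hsplit n, abs_mul, abs_mul, abs_mul,
        abs_of_nonneg (show (0:ℝ) ≤ 4 * (n : ℝ) by positivity),
        abs_of_nonneg (show (0:ℝ) ≤ ((z / 2) ^ 2) ^ n * (z / 2) ^ ν by positivity)]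
    rw [h1]
    have h2 : |(n : ℝ) + ν| ≤ ((n : ℝ) + 1) * (1 + |ν|) := by
      have := abs_add_le (n : ℝ) ν
      have h3 : |(n : ℝ)| = (n : ℝ) := abs_of_nonneg (by positivity)
      nlinarith [abs_nonneg ν, Nat.cast_nonneg (α := ℝ) n]
    calc 4 * (n : ℝ) * |(n : ℝ) + ν| * |co ν n| * (((z / 2) ^ 2) ^ n * (z / 2) ^ ν)
        ≤ 4 * ((n : ℝ) + 1) * (((n : ℝ) + 1) * (1 + |ν|)) * |co ν n|
            * (((z / 2) ^ 2) ^ n * (z / 2) ^ ν) := by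
          gcongr
          · linarith [Nat.cast_nonneg (α := ℝ) n]
      _ = 4 * (1 + |ν|) * (z / 2) ^ ν * (|co ν n| * ((n : ℝ) + 1) ^ 2 * ((z / 2) ^ 2) ^ n) := by
          ring
  have hHsum' : Summable (fun n => H (n + 1)) := (summable_nat_add_iff 1).mpr hHsum
  -- per-term identity
  have hterm : ∀ n : ℕ,
      z ^ 2 * (co ν n * mfac ν n 2 * (z / 2) ^ (2 * (n : ℝ) + ν - ((2:ℕ) : ℝ)))
        + (z * (co ν n * mfac ν n 1 * (z / 2) ^ (2 * (n : ℝ) + ν - ((1:ℕ) : ℝ)))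
        + (z ^ 2 - ν ^ 2) * (co ν n * mfac ν n 0 * (z / 2) ^ (2 * (n : ℝ) + ν - ((0:ℕ) : ℝ))))
      = H n - H (n + 1) := by
    intro n
    have e0 : (2 * (n : ℝ) + ν - ((0:ℕ) : ℝ)) = 2 * (n : ℝ) + ν := by push_cast; ring
    have e1 : (z / 2) ^ (2 * (n : ℝ) + ν - ((1:ℕ) : ℝ))
        = (z / 2) ^ (2 * (n : ℝ) + ν) / (z / 2) := by
      rw [show ((1:ℕ) : ℝ) = (1:ℝ) by norm_num, Real.rpow_sub hP, Real.rpow_one]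
    have e2 : (z / 2) ^ (2 * (n : ℝ) + ν - ((2:ℕ) : ℝ))
        = (z / 2) ^ (2 * (n : ℝ) + ν) / (z / 2) ^ (2 : ℕ) := by
      rw [Real.rpow_sub hP, ← Real.rpow_natCast (z/2) 2]
    have eH1 : (z / 2) ^ (2 * ((n : ℝ) + 1) + ν)
        = (z / 2) ^ (2 * (n : ℝ) + ν) * (z / 2) ^ (2 : ℕ) := by
      rw [show 2 * ((n : ℝ) + 1) + ν = (2 * (n : ℝ) + ν) + ((2:ℕ) : ℝ) by push_cast; ring,
        Real.rpow_add hP, Real.rpow_natCast]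
    have hm0 : mfac ν n 0 = 1 := by simp [mfac]
    have hm1 : mfac ν n 1 = (2 * (n : ℝ) + ν) / 2 := by
      simp [mfac, Finset.prod_range_succ]
    have hm2 : mfac ν n 2 = ((2 * (n : ℝ) + ν) / 2) * ((2 * (n : ℝ) + ν - 1) / 2) := by
      simp [mfac, Finset.prod_range_succ]
      ring
    have hH1 : H (n + 1) = -4 * co ν n * (z / 2) ^ (2 * (n : ℝ) + ν) * (z / 2) ^ (2 : ℕ) := by
      rw [hHdef]
      simp only []
      push_cast
      rw [eH1]
      linear_combination (4 * (z / 2) ^ (2 * (n : ℝ) + ν) * (z / 2) ^ (2:ℕ)) * co_succ ν n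
    rw [e0, e1, e2, hm0, hm1, hm2, hH1, hHdef]
    field_simp
    ring
  calc z ^ 2 * bJ ν 2 z + z * bJ ν 1 z + (z ^ 2 - ν ^ 2) * bJ ν 0 z
      = ∑' n : ℕ, (z ^ 2 * (co ν n * mfac ν n 2 * (z / 2) ^ (2 * (n : ℝ) + ν - ((2:ℕ) : ℝ)))
        + (z * (co ν n * mfac ν n 1 * (z / 2) ^ (2 * (n : ℝ) + ν - ((1:ℕ) : ℝ)))
        + (z ^ 2 - ν ^ 2) * (co ν n * mfac ν n 0 * (z / 2) ^ (2 * (n : ℝ) + ν - ((0:ℕ) : ℝ))))) := by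
        rw [Summable.tsum_add ((bJ_summable ν 2 hz).mul_left _)
          (Summable.add ((bJ_summable ν 1 hz).mul_left _) ((bJ_summable ν 0 hz).mul_left _)),
          Summable.tsum_add ((bJ_summable ν 1 hz).mul_left _) ((bJ_summable ν 0 hz).mul_left _),
          tsum_mul_left, tsum_mul_left, tsum_mul_left]
        rw [bJ, bJ, bJ]
        ring
    _ = ∑' n : ℕ, (H n - H (n + 1)) := tsum_congr hterm
    _ = (∑' n : ℕ, H n) - (∑' n : ℕ, H (n + 1)) := Summable.tsum_sub hHsum hHsum'
    _ = 0 := by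
        rw [Summable.tsum_eq_zero_add hHsum]
        have : H 0 = 0 := by simp [hHdef]
        rw [this]
        ring

lemma besselJ_hasDerivAt (ν : ℝ) {z : ℝ} (hz : 0 < z) :
    HasDerivAt (besselJ ν) (bJ ν 1 z) z := by
  rw [besselJ_eq ν]
  exact bJ_hasDerivAt ν 0 hz

lemma besselJ_deriv (ν : ℝ) {z : ℝ} (hz : 0 < z) :
    deriv (besselJ ν) z = bJ ν 1 z := (besselJ_hasDerivAt ν hz).deriv

lemma besselJ_iteratedDeriv_two (ν : ℝ) {z : ℝ} (hz : 0 < z) :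
    iteratedDeriv 2 (besselJ ν) z = bJ ν 2 z := by
  rw [iteratedDeriv_succ, iteratedDeriv_one]
  have hev : deriv (besselJ ν) =ᶠ[nhds z] bJ ν 1 :=
    Filter.eventuallyEq_of_mem (Ioi_mem_nhds hz) (fun x hx => besselJ_deriv ν hx)
  rw [hev.deriv_eq]
  exact (bJ_hasDerivAt ν 1 hz).deriv

lemma mercer_eq (a b c ν : ℝ) {z : ℝ} (hz : 0 < z) :
    mercerN a b c ν z = (b - a) * z * bJ ν 1 z + (c + a * ν ^ 2 - a * z ^ 2) * bJ ν 0 z := by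
  unfold mercerN
  rw [besselJ_iteratedDeriv_two ν hz, besselJ_deriv ν hz, besselJ_eq ν]
  linear_combination a * bessel_ode ν hz

noncomputable def NN1 (a b c ν z : ℝ) : ℝ :=
  (c + a * ν ^ 2 - a * z ^ 2) * bJ ν 1 z + ((b - a) * ν ^ 2 * z⁻¹ - (a + b) * z) * bJ ν 0 z

lemma mercer_hasDerivAt (a b c ν : ℝ) {z : ℝ} (hz : 0 < z) :
    HasDerivAt (mercerN a b c ν) (NN1 a b c ν z) z := by
  have hz' : z ≠ 0 := ne_of_gt hz
  have h1 : HasDerivAt (fun y : ℝ => (b - a) * y) (b - a) z := by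
    simpa using (hasDerivAt_id z).const_mul (b - a)
  have h2 := h1.mul (bJ_hasDerivAt ν 1 hz)
  have h3 : HasDerivAt (fun y : ℝ => c + a * ν ^ 2 - a * y ^ 2) (-(a * (2 * z))) z := by
    have := ((hasDerivAt_pow 2 z).const_mul a).const_sub (c + a * ν ^ 2)
    simpa using this
  have h4 := h3.mul (bJ_hasDerivAt ν 0 hz)
  have h5 := h2.add h4
  have h6 : HasDerivAt (mercerN a b c ν)
      ((b - a) * bJ ν 1 z + (b - a) * z * bJ ν 2 z
        + (-(a * (2 * z)) * bJ ν 0 z + (c + a * ν ^ 2 - a * z ^ 2) * bJ ν 1 z)) z := by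
    refine HasDerivAt.congr_of_eventuallyEq ?_
      (Filter.eventuallyEq_of_mem (Ioi_mem_nhds hz) (fun x hx => mercer_eq a b c ν hx))
    convert h5 using 1
    rfl
  convert h6 using 1
  have hE := bessel_ode ν hz
  unfold NN1
  field_simp
  linear_combination (a - b) * hE

lemma mercer_deriv (a b c ν : ℝ) {z : ℝ} (hz : 0 < z) :
    deriv (mercerN a b c ν) z = NN1 a b c ν z := (mercer_hasDerivAt a b c ν hz).deriv

lemma NN1_hasDerivAt (a b c ν : ℝ) {z : ℝ} (hz : 0 < z) :
    HasDerivAt (NN1 a b c ν)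
      ((-(a * (2 * z)) * bJ ν 1 z + (c + a * ν ^ 2 - a * z ^ 2) * bJ ν 2 z)
        + (((b - a) * ν ^ 2 * -(z ^ 2)⁻¹ - (a + b)) * bJ ν 0 z
          + ((b - a) * ν ^ 2 * z⁻¹ - (a + b) * z) * bJ ν 1 z)) z := by
  have hz' : z ≠ 0 := ne_of_gt hz
  have k1 : HasDerivAt (fun y : ℝ => c + a * ν ^ 2 - a * y ^ 2) (-(a * (2 * z))) z := by
    have := ((hasDerivAt_pow 2 z).const_mul a).const_sub (c + a * ν ^ 2)
    simpa using this
  have k2 := k1.mul (bJ_hasDerivAt ν 1 hz)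
  have k3 : HasDerivAt (fun y : ℝ => (b - a) * ν ^ 2 * y⁻¹ - (a + b) * y)
      ((b - a) * ν ^ 2 * -(z ^ 2)⁻¹ - (a + b)) z := by
    have i1 := (hasDerivAt_inv hz').const_mul ((b - a) * ν ^ 2)
    have i2 : HasDerivAt (fun y : ℝ => (a + b) * y) (a + b) z := by
      simpa using (hasDerivAt_id z).const_mul (a + b)
    exact i1.sub i2
  have k4 := k3.mul (bJ_hasDerivAt ν 0 hz)
  exact k2.add k4

lemma mercer_iteratedDeriv_two (a b c ν : ℝ) {z : ℝ} (hz : 0 < z) :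
    iteratedDeriv 2 (mercerN a b c ν) z
      = (-(a * (2 * z)) * bJ ν 1 z + (c + a * ν ^ 2 - a * z ^ 2) * bJ ν 2 z)
        + (((b - a) * ν ^ 2 * -(z ^ 2)⁻¹ - (a + b)) * bJ ν 0 z
          + ((b - a) * ν ^ 2 * z⁻¹ - (a + b) * z) * bJ ν 1 z) := by
  rw [iteratedDeriv_succ, iteratedDeriv_one]
  have hev : deriv (mercerN a b c ν) =ᶠ[nhds z] NN1 a b c ν :=
    Filter.eventuallyEq_of_mem (Ioi_mem_nhds hz) (fun x hx => mercer_deriv a b c ν hx)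
  rw [hev.deriv_eq]
  exact (NN1_hasDerivAt a b c ν hz).deriv

end MercerAux

open MercerAux

/-- The function `y = N_ν(z)` satisfies
`z² y'' + A(z) z y' + [B(z) + z² − ν²] y = 0` at every point (with `z > 0`) where
`a²z⁴ − p z² + q ≠ 0`, with
`A(z) = (−3a²z⁴ + p z² + q)/(a²z⁴ − p z² + q)`,
`B(z) = (2a(a+b)z⁴ + 2r z²)/(a²z⁴ − p z² + q)`,
`p = 2a(aν² + c) + (a² − b²)`, `q = (aν² + c)² − ν²(a − b)²`,
`r = aν²(3a − b) + c(a + b)`. -/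
theorem mercerN_ode (a b c ν : ℝ) (p q r : ℝ)
    (hp : p = 2 * a * (a * ν ^ 2 + c) + (a ^ 2 - b ^ 2))
    (hq : q = (a * ν ^ 2 + c) ^ 2 - ν ^ 2 * (a - b) ^ 2)
    (hr : r = a * ν ^ 2 * (3 * a - b) + c * (a + b)) :
    ∀ z : ℝ, 0 < z → a ^ 2 * z ^ 4 - p * z ^ 2 + q ≠ 0 →
      z ^ 2 * iteratedDeriv 2 (mercerN a b c ν) z
        + ((-3 * a ^ 2 * z ^ 4 + p * z ^ 2 + q) / (a ^ 2 * z ^ 4 - p * z ^ 2 + q))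
            * (z * deriv (mercerN a b c ν) z)
        + ((2 * a * (a + b) * z ^ 4 + 2 * r * z ^ 2) / (a ^ 2 * z ^ 4 - p * z ^ 2 + q)
            + z ^ 2 - ν ^ 2) * mercerN a b c ν z = 0 := by
  subst hp hq hr
  intro z hz hD
  have hz' : z ≠ 0 := ne_of_gt hz
  have hE := bessel_ode ν hz
  have hw : bJ ν 2 z = (-(z * bJ ν 1 z) - (z ^ 2 - ν ^ 2) * bJ ν 0 z) / z ^ 2 := by
    field_simp
    linarith [hE]
  rw [mercer_iteratedDeriv_two a b c ν hz, mercer_deriv a b c ν hz,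
    mercer_eq a b c ν hz, hw]
  unfold NN1
  set D := a ^ 2 * z ^ 4 - (2 * a * (a * ν ^ 2 + c) + (a ^ 2 - b ^ 2)) * z ^ 2 + ((a * ν ^ 2 + c) ^ 2 - ν ^ 2 * (a - b) ^ 2) with hDdef
  field_simp
  rw [hDdef]
  ring
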